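/- Let γ_1 : ℝ^d → ℝ be continuous with unique maximizer 0 and γ_1(0) > 0. Fix k ≥ 2 and ε ∈ (0,1). Then there exists δ > 0 such that for all v with ‖v‖ < δ, all w ∈ ℝ^d, and all u ∈ [0, 1−ε): k·u·γ_1((v−w)/u) + (1−u)·γ_1(w/(1−u)) < k·γ_1(v), where for u = 0 the first term is interpreted as 0. -/

import Mathlib

open Real

/-- (Lemma 5.5) For `γ₁` continuous with strict unique maximum at `0`, `γ₁ 0 > 0`,
`k ≥ 2` and `ε ∈ (0,1)`, there is `δ > 0` such that for `‖v‖ < δ`, all `w`, and all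
`u ∈ [0, 1−ε)`: `k u γ₁((v−w)/u) + (1−u) γ₁(w/(1−u)) < k γ₁ v` (the first term being
`0` when `u = 0`, as `0 * γ₁(0 • _) = 0`). -/
theorem sup_away_from_one (d : ℕ)
    (γ₁ : EuclideanSpace ℝ (Fin d) → ℝ)
    (hcont : Continuous γ₁)
    (hmax : ∀ v, γ₁ v ≤ γ₁ 0)
    (hstrict : ∀ v, v ≠ 0 → γ₁ v < γ₁ 0)
    (hpos : 0 < γ₁ 0)
    (k : ℕ) (hk : 2 ≤ k) (ε : ℝ) (hε : ε ∈ Set.Ioo (0 : ℝ) 1) :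
    ∃ δ : ℝ, 0 < δ ∧ ∀ v : EuclideanSpace ℝ (Fin d), ‖v‖ < δ →
      ∀ w : EuclideanSpace ℝ (Fin d), ∀ u : ℝ, 0 ≤ u → u < 1 - ε →
        (k : ℝ) * u * γ₁ (u⁻¹ • (v - w)) + (1 - u) * γ₁ ((1 - u)⁻¹ • w)
          < k * γ₁ v := by
  obtain ⟨hε0, hε1⟩ := hε
  have hk1 : (1 : ℝ) ≤ (k : ℝ) - 1 := by
    have : (2 : ℝ) ≤ (k : ℝ) := by exact_mod_cast hk
    linarith
  set c : ℝ := ((k : ℝ) - 1) * ε * γ₁ 0 / k with hc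
  have hkpos : (0 : ℝ) < k := by positivity
  have hcpos : 0 < c := by
    apply div_pos _ hkpos
    positivity
  have hca : ContinuousAt γ₁ 0 := hcont.continuousAt
  rw [Metric.continuousAt_iff] at hca
  obtain ⟨δ, hδ, hδ'⟩ := hca c hcpos
  refine ⟨δ, hδ, fun v hv w u hu hu' => ?_⟩
  have hvd : dist v 0 < δ := by rwa [dist_zero_right]
  have h1 : γ₁ 0 - c < γ₁ v := by
    have := hδ' hvd
    rw [Real.dist_eq, abs_sub_lt_iff] at this
    linarith [this.2]
  have h2 : γ₁ (u⁻¹ • (v - w)) ≤ γ₁ 0 := hmax _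
  have h3 : γ₁ ((1 - u)⁻¹ • w) ≤ γ₁ 0 := hmax _
  have h4 : (k : ℝ) * u * γ₁ (u⁻¹ • (v - w)) ≤ (k : ℝ) * u * γ₁ 0 := by
    apply mul_le_mul_of_nonneg_left h2 (by positivity)
  have h5 : (1 - u) * γ₁ ((1 - u)⁻¹ • w) ≤ (1 - u) * γ₁ 0 := by
    apply mul_le_mul_of_nonneg_left h3 (by linarith)
  have hceq : c * k = ((k : ℝ) - 1) * ε * γ₁ 0 := by
    rw [hc]; exact div_mul_cancel₀ _ hkpos.ne'
  -- LHS ≤ (1 + (k-1)u) γ₁0 ≤ (k - (k-1)ε) γ₁0 = k γ₁0 - c k < k γ₁ v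
  nlinarith [mul_lt_mul_of_pos_left h1 hkpos, mul_le_mul_of_nonneg_left hu'.le (by linarith : (0:ℝ) ≤ (k:ℝ) - 1), hpos, mul_pos hε0 hpos]
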